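/- arXiv:2105.14223 — 4 statements merged into one kernel-verified Lean document; each statement's English description precedes it below -/
import Mathlib

section
/- Let q be a real number with q > 1, let r be a natural number, and let s be a complex number with Re(s) > 0. Then ∏_{1 ≤ i < j ≤ r} (1 − q^{−2(2s+2r−i−j+2)}) / (1 − q^{−2(2s+2r−i−j+1)}) · ∏_{i=1}^{r} (q^{−(2s+2r−2i)} − 1) / ( q · (1 − q^{−(2s+2r−2i+1)}) ) = (−q)^{−r} · ∏_{i=1}^{r} (1 − q^{−2(2s+r+i)}) / (1 − q^{−2(2s+2i)}) · ∏_{i=1}^{r} (1 − q^{−(2s+2i−2)}) / (1 − q^{−(2s+2i−1)}). (Under the hypothesis Re(s) > 0 every denominator occurring is nonzero.) -/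
open Finset

private noncomputable def Fq (q : ℝ) (s : ℂ) (n : ℤ) : ℂ :=
  1 - (q:ℂ) ^ (-(4*s + 2*(n:ℂ)))

private noncomputable def Eq' (q : ℝ) (s : ℂ) (n : ℤ) : ℂ :=
  1 - (q:ℂ) ^ (-(2*s + (n:ℂ)))

private lemma telescope (G : ℕ → ℂ) (hG : ∀ n, G n ≠ 0) :
    ∀ m, ∏ k ∈ Finset.range m, G (k + 1) / G k = G m / G 0 := by
  intro m
  induction m with
  | zero => simp [div_self (hG 0)]
  | succ n ih =>
      rw [Finset.prod_range_succ, ih, div_mul_div_comm, mul_comm (G n) (G (n+1)),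
        mul_div_mul_right _ _ (hG n)]

private lemma key_ne (q : ℝ) (hq : 1 < q) (x : ℂ) (hx : 0 < x.re) :
    1 - (q:ℂ) ^ (-x) ≠ 0 := by
  have hq0 : (0:ℝ) < q := by linarith
  intro h
  have h1 : (q:ℂ) ^ (-x) = 1 := by linear_combination -h
  have h2 : ‖(q:ℂ) ^ (-x)‖ = q ^ (-x).re :=
    Complex.norm_cpow_eq_rpow_re_of_pos hq0 _
  rw [h1, Complex.neg_re] at h2
  have h3 : q ^ (-x.re) < 1 :=
    Real.rpow_lt_one_of_one_lt_of_neg hq (by linarith)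
  simp at h2
  linarith [h2 ▸ h3]

private lemma Fq_ne (q : ℝ) (hq : 1 < q) (s : ℂ) (hs : 0 < s.re) (n : ℤ) (hn : 0 ≤ n) :
    Fq q s n ≠ 0 := by
  apply key_ne q hq
  have h : (4*s + 2*(n:ℂ)).re = 4*s.re + 2*(n:ℝ) := by
    simp [Complex.add_re, Complex.mul_re]
  rw [h]
  have : (0:ℝ) ≤ (n:ℝ) := by exact_mod_cast hn
  linarith

private lemma inner_prod (q : ℝ) (hq : 1 < q) (r : ℕ) (s : ℂ) (hs : 0 < s.re)
    (j : ℕ) (hj : j ∈ Finset.Icc 1 r) :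
    (∏ i ∈ Finset.Ico 1 j,
        (1 - (q : ℂ) ^ (-(2 * (2 * s + 2 * (r : ℂ) - (i : ℂ) - (j : ℂ) + 2)))) /
          (1 - (q : ℂ) ^ (-(2 * (2 * s + 2 * (r : ℂ) - (i : ℂ) - (j : ℂ) + 1))))) =
      Fq q s (2*(r:ℤ) - j + 1) / Fq q s (2*(r:ℤ) - 2*j + 2) := by
  obtain ⟨hj1, hjr⟩ := Finset.mem_Icc.mp hj
  set G : ℕ → ℂ := fun k => Fq q s (2*(r:ℤ) - 2*j + 2 + k) with hGdef
  have hG : ∀ n, G n ≠ 0 := by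
    intro n
    apply Fq_ne q hq s hs
    omega
  have step1 : ∀ i ∈ Finset.Ico 1 j,
      (1 - (q : ℂ) ^ (-(2 * (2 * s + 2 * (r : ℂ) - (i : ℂ) - (j : ℂ) + 2)))) /
          (1 - (q : ℂ) ^ (-(2 * (2 * s + 2 * (r : ℂ) - (i : ℂ) - (j : ℂ) + 1)))) =
      Fq q s (2*(r:ℤ) - i - j + 2) / Fq q s (2*(r:ℤ) - i - j + 1) := by
    intro i hi
    have e1 : -(2 * (2 * s + 2 * (r : ℂ) - (i : ℂ) - (j : ℂ) + 2))
        = -(4*s + 2*(((2*(r:ℤ) - i - j + 2) : ℤ):ℂ)) := by push_cast; ring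
    have e2 : -(2 * (2 * s + 2 * (r : ℂ) - (i : ℂ) - (j : ℂ) + 1))
        = -(4*s + 2*(((2*(r:ℤ) - i - j + 1) : ℤ):ℂ)) := by push_cast; ring
    rw [Fq, Fq, e1, e2]
  rw [Finset.prod_congr rfl step1, Finset.prod_Ico_eq_prod_range,
    ← Finset.prod_range_reflect]
  have step3 : ∀ k ∈ Finset.range (j - 1),
      Fq q s (2*(r:ℤ) - (1 + (j - 1 - 1 - k) : ℕ) - j + 2) /
        Fq q s (2*(r:ℤ) - (1 + (j - 1 - 1 - k) : ℕ) - j + 1) = G (k+1) / G k := by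
    intro k hk
    have hk' := Finset.mem_range.mp hk
    simp only [hGdef]
    have a1 : (2*(r:ℤ) - (1 + (j - 1 - 1 - k) : ℕ) - j + 2)
        = 2*(r:ℤ) - 2*j + 2 + ((k+1 : ℕ) : ℤ) := by omega
    have a2 : (2*(r:ℤ) - (1 + (j - 1 - 1 - k) : ℕ) - j + 1)
        = 2*(r:ℤ) - 2*j + 2 + ((k : ℕ) : ℤ) := by omega
    rw [a1, a2]
  rw [Finset.prod_congr rfl step3]
  rw [telescope G hG (j-1)]
  have b1 : G (j - 1) = Fq q s (2 * (r:ℤ) - j + 1) := by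
    simp only [hGdef]; congr 1; omega
  have b2 : G 0 = Fq q s (2 * (r:ℤ) - 2*j + 2) := by
    simp only [hGdef]; congr 1; omega
  rw [b1, b2]



/-- Evaluation of the intertwining constant `C⁻_{w'_r}(s)`
(from the proof of Proposition 5.2 of Liu, "Theta correspondence for almost
unramified representations of unitary groups"): for a real `q > 1`, a natural
number `r`, and a complex `s` with `Re s > 0`,
`∏_{1 ≤ i < j ≤ r} (1 − q^{−2(2s+2r−i−j+2)})/(1 − q^{−2(2s+2r−i−j+1)})
  · ∏_{i=1}^{r} (q^{−(2s+2r−2i)} − 1)/(q(1 − q^{−(2s+2r−2i+1)}))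
= (−q)^{−r} · ∏_{i=1}^{r} (1 − q^{−2(2s+r+i)})/(1 − q^{−2(2s+2i)})
  · ∏_{i=1}^{r} (1 − q^{−(2s+2i−2)})/(1 − q^{−(2s+2i−1)})`. -/
theorem stmt_0 (q : ℝ) (hq : 1 < q) (r : ℕ) (s : ℂ) (hs : 0 < s.re) :
    (∏ j ∈ Finset.Icc 1 r, ∏ i ∈ Finset.Ico 1 j,
        (1 - (q : ℂ) ^ (-(2 * (2 * s + 2 * (r : ℂ) - (i : ℂ) - (j : ℂ) + 2)))) /
          (1 - (q : ℂ) ^ (-(2 * (2 * s + 2 * (r : ℂ) - (i : ℂ) - (j : ℂ) + 1))))) *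
      (∏ i ∈ Finset.Icc 1 r,
        ((q : ℂ) ^ (-(2 * s + 2 * (r : ℂ) - 2 * (i : ℂ))) - 1) /
          ((q : ℂ) * (1 - (q : ℂ) ^ (-(2 * s + 2 * (r : ℂ) - 2 * (i : ℂ) + 1))))) =
    (-(q : ℂ)) ^ (-(r : ℤ)) *
      (∏ i ∈ Finset.Icc 1 r,
        (1 - (q : ℂ) ^ (-(2 * (2 * s + (r : ℂ) + (i : ℂ))))) /
          (1 - (q : ℂ) ^ (-(2 * (2 * s + 2 * (i : ℂ)))))) *
      (∏ i ∈ Finset.Icc 1 r,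
        (1 - (q : ℂ) ^ (-(2 * s + 2 * (i : ℂ) - 2))) /
          (1 - (q : ℂ) ^ (-(2 * s + 2 * (i : ℂ) - 1)))) := by
  -- Step A: the double product equals ∏ Fq(r+i)/Fq(2i)
  have A : (∏ j ∈ Finset.Icc 1 r, ∏ i ∈ Finset.Ico 1 j,
        (1 - (q : ℂ) ^ (-(2 * (2 * s + 2 * (r : ℂ) - (i : ℂ) - (j : ℂ) + 2)))) /
          (1 - (q : ℂ) ^ (-(2 * (2 * s + 2 * (r : ℂ) - (i : ℂ) - (j : ℂ) + 1)))))
      = ∏ i ∈ Finset.Icc 1 r, Fq q s ((r:ℤ) + i) / Fq q s (2*(i:ℤ)) := by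
    rw [Finset.prod_congr rfl (fun j hj => inner_prod q hq r s hs j hj)]
    simp only [← Finset.Ico_add_one_right_eq_Icc, Finset.prod_Ico_eq_prod_range, Nat.add_sub_cancel]
    rw [← Finset.prod_range_reflect]
    apply Finset.prod_congr rfl
    intro k hk
    have hk' := Finset.mem_range.mp hk
    congr 1 <;> (congr 1; omega)
  -- Step A': the first RHS product equals ∏ Fq(r+i)/Fq(2i)
  have A' : (∏ i ∈ Finset.Icc 1 r,
        (1 - (q : ℂ) ^ (-(2 * (2 * s + (r : ℂ) + (i : ℂ))))) /
          (1 - (q : ℂ) ^ (-(2 * (2 * s + 2 * (i : ℂ))))))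
      = ∏ i ∈ Finset.Icc 1 r, Fq q s ((r:ℤ) + i) / Fq q s (2*(i:ℤ)) := by
    apply Finset.prod_congr rfl
    intro i hi
    have e1 : -(2 * (2 * s + (r : ℂ) + (i : ℂ)))
        = -(4*s + 2*((((r:ℤ) + i) : ℤ):ℂ)) := by push_cast; ring
    have e2 : -(2 * (2 * s + 2 * (i : ℂ)))
        = -(4*s + 2*(((2*(i:ℤ)) : ℤ):ℂ)) := by push_cast; ring
    rw [Fq, Fq, e1, e2]
  -- Step B: the second LHS product
  have B : (∏ i ∈ Finset.Icc 1 r,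
        ((q : ℂ) ^ (-(2 * s + 2 * (r : ℂ) - 2 * (i : ℂ))) - 1) /
          ((q : ℂ) * (1 - (q : ℂ) ^ (-(2 * s + 2 * (r : ℂ) - 2 * (i : ℂ) + 1)))))
      = (-(q:ℂ)) ^ (-(r:ℤ)) *
        ∏ i ∈ Finset.Icc 1 r, Eq' q s (2*(i:ℤ) - 2) / Eq' q s (2*(i:ℤ) - 1) := by
    have B1 : ∀ i ∈ Finset.Icc 1 r,
        ((q : ℂ) ^ (-(2 * s + 2 * (r : ℂ) - 2 * (i : ℂ))) - 1) /
          ((q : ℂ) * (1 - (q : ℂ) ^ (-(2 * s + 2 * (r : ℂ) - 2 * (i : ℂ) + 1))))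
        = (-(q:ℂ))⁻¹ * (Eq' q s (2*(r:ℤ) - 2*i) / Eq' q s (2*(r:ℤ) - 2*i + 1)) := by
      intro i hi
      have e1 : -(2 * s + 2 * (r : ℂ) - 2 * (i : ℂ))
          = -(2*s + (((2*(r:ℤ) - 2*i) : ℤ):ℂ)) := by push_cast; ring
      have e2 : -(2 * s + 2 * (r : ℂ) - 2 * (i : ℂ) + 1)
          = -(2*s + (((2*(r:ℤ) - 2*i + 1) : ℤ):ℂ)) := by push_cast; ring
      rw [Eq', Eq', e1, e2, div_eq_mul_inv, div_eq_mul_inv, mul_inv, inv_neg]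
      ring
    rw [Finset.prod_congr rfl B1, Finset.prod_mul_distrib, Finset.prod_const,
      Nat.card_Icc, Nat.add_sub_cancel]
    congr 1
    · rw [zpow_neg, zpow_natCast, inv_pow]
    · simp only [← Finset.Ico_add_one_right_eq_Icc, Finset.prod_Ico_eq_prod_range, Nat.add_sub_cancel]
      rw [← Finset.prod_range_reflect]
      apply Finset.prod_congr rfl
      intro k hk
      have hk' := Finset.mem_range.mp hk
      congr 1 <;> (congr 1; omega)
  -- Step B': the second RHS product
  have B' : (∏ i ∈ Finset.Icc 1 r,
        (1 - (q : ℂ) ^ (-(2 * s + 2 * (i : ℂ) - 2))) /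
          (1 - (q : ℂ) ^ (-(2 * s + 2 * (i : ℂ) - 1))))
      = ∏ i ∈ Finset.Icc 1 r, Eq' q s (2*(i:ℤ) - 2) / Eq' q s (2*(i:ℤ) - 1) := by
    apply Finset.prod_congr rfl
    intro i hi
    have e1 : -(2 * s + 2 * (i : ℂ) - 2)
        = -(2*s + (((2*(i:ℤ) - 2) : ℤ):ℂ)) := by push_cast; ring
    have e2 : -(2 * s + 2 * (i : ℂ) - 1)
        = -(2*s + (((2*(i:ℤ) - 1) : ℤ):ℂ)) := by push_cast; ring
    rw [Eq', Eq', e1, e2]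
  rw [A, A', B, B']
  ring
end

section
/- Let q be a real number with q > 1, let r be a natural number, and let s be a complex number with Re(s) > 0. Define C⁻(s) = ∏_{1 ≤ i < j ≤ r} (1 − q^{−2(2s+2r−i−j+2)}) / (1 − q^{−2(2s+2r−i−j+1)}) · ∏_{i=1}^{r} (q^{−(2s+2r−2i)} − 1) / ( q · (1 − q^{−(2s+2r−2i+1)}) ) and C⁺(s) = ∏_{i=1}^{r} (1 − q^{−2(2s+r+i)}) / (1 − q^{−2(2s+2i)}) · ∏_{i=1}^{r} (1 − q^{−(2s+2i)}) / (1 − q^{−(2s+2i−1)}). Then C⁻(s) = (−q)^{−r} · ( (1 − q^{−2s}) / (1 − q^{−(2s+2r)}) ) · C⁺(s). (Under the hypothesis Re(s) > 0 every denominator occurring is nonzero.) -/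
open Finset

private lemma one_sub_cpow_ne {q : ℝ} (hq : 1 < q) {z : ℂ} (hz : 0 < z.re) :
    1 - (q : ℂ) ^ (-z) ≠ 0 := by
  intro h
  have h1 : (q : ℂ) ^ (-z) = 1 := by linear_combination -h
  have h2 : ‖(q : ℂ) ^ (-z)‖ = q ^ (-z).re :=
    Complex.norm_cpow_eq_rpow_re_of_pos (by linarith) _
  rw [h1, norm_one] at h2
  have h3 : q ^ (-z).re < 1 :=
    Real.rpow_lt_one_of_one_lt_of_neg hq (by simp [Complex.neg_re]; linarith)
  rw [← h2] at h3
  exact lt_irrefl _ h3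

private lemma telescopeC (f : ℕ → ℂ) : ∀ n : ℕ, (∀ i, i ≤ n → f i ≠ 0) →
    ∏ i ∈ Finset.range n, f i / f (i + 1) = f 0 / f n := by
  intro n
  induction n with
  | zero => intro h; rw [Finset.range_zero, Finset.prod_empty, div_self (h 0 le_rfl)]
  | succ n ih =>
    intro h
    rw [Finset.prod_range_succ, ih (fun i hi => h i (Nat.le_succ_of_le hi)),
      div_mul_div_comm, mul_comm (f 0) (f n), mul_div_mul_left _ _ (h n (Nat.le_succ n))]

private lemma reflect_Icc (f g : ℕ → ℂ) (r : ℕ)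
    (h : ∀ i, 1 ≤ i → i ≤ r → f (r + 1 - i) = g i) :
    ∏ i ∈ Finset.Icc 1 r, f i = ∏ i ∈ Finset.Icc 1 r, g i := by
  rw [← Finset.Ico_add_one_right_eq_Icc, Finset.prod_Ico_eq_prod_range, Finset.prod_Ico_eq_prod_range]
  simp only [Nat.add_sub_cancel]
  rw [← Finset.prod_range_reflect (fun k => f (1 + k)) r]
  apply Finset.prod_congr rfl
  intro i hi
  have hi' := Finset.mem_range.mp hi
  show f (1 + (r - 1 - i)) = g (1 + i)
  have hidx : 1 + (r - 1 - i) = r + 1 - (1 + i) := by omega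
  rw [hidx]
  exact h (1 + i) (by omega) (by omega)

/-- The ratio identity `C⁻(s) = (−q)^{−r} · (1 − q^{−2s})/(1 − q^{−(2s+2r)}) · C⁺(s)`
between the almost-unramified and spherical (Gindikin–Karpelevich) intertwining constants,
equation (zeta6) in the proof of Proposition 5.2. -/
theorem stmt_1 (q : ℝ) (hq : 1 < q) (r : ℕ) (s : ℂ) (hs : 0 < s.re) :
    (∏ j ∈ Finset.Icc 1 r, ∏ i ∈ Finset.Ico 1 j,
        (1 - (q : ℂ) ^ (-(2 * (2 * s + 2 * (r : ℂ) - (i : ℂ) - (j : ℂ) + 2)))) /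
          (1 - (q : ℂ) ^ (-(2 * (2 * s + 2 * (r : ℂ) - (i : ℂ) - (j : ℂ) + 1))))) *
      (∏ i ∈ Finset.Icc 1 r,
        ((q : ℂ) ^ (-(2 * s + 2 * (r : ℂ) - 2 * (i : ℂ))) - 1) /
          ((q : ℂ) * (1 - (q : ℂ) ^ (-(2 * s + 2 * (r : ℂ) - 2 * (i : ℂ) + 1))))) =
    (-(q : ℂ)) ^ (-(r : ℤ)) *
      ((1 - (q : ℂ) ^ (-(2 * s))) / (1 - (q : ℂ) ^ (-(2 * s + 2 * (r : ℂ))))) *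
      ((∏ i ∈ Finset.Icc 1 r,
          (1 - (q : ℂ) ^ (-(2 * (2 * s + (r : ℂ) + (i : ℂ))))) /
            (1 - (q : ℂ) ^ (-(2 * (2 * s + 2 * (i : ℂ)))))) *
        (∏ i ∈ Finset.Icc 1 r,
          (1 - (q : ℂ) ^ (-(2 * s + 2 * (i : ℂ)))) /
            (1 - (q : ℂ) ^ (-(2 * s + 2 * (i : ℂ) - 1))))) := by
  have hq0 : (0:ℝ) < q := by linarith
  have hqC : (q : ℂ) ≠ 0 := by exact_mod_cast ne_of_gt hq0
  -- Step 1: the double product telescopes and reflects.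
  have hDP : (∏ j ∈ Finset.Icc 1 r, ∏ i ∈ Finset.Ico 1 j,
        (1 - (q : ℂ) ^ (-(2 * (2 * s + 2 * (r : ℂ) - (i : ℂ) - (j : ℂ) + 2)))) /
          (1 - (q : ℂ) ^ (-(2 * (2 * s + 2 * (r : ℂ) - (i : ℂ) - (j : ℂ) + 1)))))
      = ∏ i ∈ Finset.Icc 1 r,
          (1 - (q : ℂ) ^ (-(2 * (2 * s + (r : ℂ) + (i : ℂ))))) /
            (1 - (q : ℂ) ^ (-(2 * (2 * s + 2 * (i : ℂ))))) := by
    have hinner : ∀ j ∈ Finset.Icc 1 r,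
        (∏ i ∈ Finset.Ico 1 j,
          (1 - (q : ℂ) ^ (-(2 * (2 * s + 2 * (r : ℂ) - (i : ℂ) - (j : ℂ) + 2)))) /
            (1 - (q : ℂ) ^ (-(2 * (2 * s + 2 * (r : ℂ) - (i : ℂ) - (j : ℂ) + 1)))))
        = (1 - (q : ℂ) ^ (-(2 * (2 * s + 2 * (r : ℂ) - (j : ℂ) + 1)))) /
            (1 - (q : ℂ) ^ (-(2 * (2 * s + 2 * (r : ℂ) - 2 * (j : ℂ) + 2)))) := by
      intro j hj
      obtain ⟨hj1, hjr⟩ := Finset.mem_Icc.mp hj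
      set F : ℕ → ℂ :=
        fun k => 1 - (q : ℂ) ^ (-(2 * (2 * s + 2 * (r : ℂ) - (j : ℂ) - (k : ℂ) + 1))) with hF
      have hFne : ∀ k, k ≤ j - 1 → F k ≠ 0 := by
        intro k hk
        have hk' : (k : ℝ) ≤ (j : ℝ) - 1 := by
          have h1 : (k : ℝ) ≤ ((j - 1 : ℕ) : ℝ) := by exact_mod_cast hk
          rwa [Nat.cast_sub hj1, Nat.cast_one] at h1
        have hjr' : (j : ℝ) ≤ (r : ℝ) := by exact_mod_cast hjr
        simp only [hF]
        rw [show (2 * (2 * s + 2 * (r : ℂ) - (j : ℂ) - (k : ℂ) + 1))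
            = (4:ℂ) * s + (((4 * r - 2 * j - 2 * k + 2 : ℝ)) : ℂ) by push_cast; ring]
        exact one_sub_cpow_ne hq (by simp; linarith)
      rw [Finset.prod_Ico_eq_prod_range]
      have hstep : ∀ i ∈ Finset.range (j - 1),
          (1 - (q : ℂ) ^ (-(2 * (2 * s + 2 * (r : ℂ) - ((1 + i : ℕ) : ℂ) - (j : ℂ) + 2)))) /
            (1 - (q : ℂ) ^ (-(2 * (2 * s + 2 * (r : ℂ) - ((1 + i : ℕ) : ℂ) - (j : ℂ) + 1))))
          = F i / F (i + 1) := by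
        intro i _
        simp only [hF]
        rw [show (-(2 * (2 * s + 2 * (r : ℂ) - ((1 + i : ℕ) : ℂ) - (j : ℂ) + 2)))
            = -(2 * (2 * s + 2 * (r : ℂ) - (j : ℂ) - ((i : ℕ) : ℂ) + 1)) by push_cast; ring,
          show (-(2 * (2 * s + 2 * (r : ℂ) - ((1 + i : ℕ) : ℂ) - (j : ℂ) + 1)))
            = -(2 * (2 * s + 2 * (r : ℂ) - (j : ℂ) - ((i + 1 : ℕ) : ℂ) + 1)) by push_cast; ring]
      rw [Finset.prod_congr rfl hstep, telescopeC F (j - 1) hFne]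
      have e0 : F 0 = 1 - (q : ℂ) ^ (-(2 * (2 * s + 2 * (r : ℂ) - (j : ℂ) + 1))) := by
        simp only [hF]
        rw [show (-(2 * (2 * s + 2 * (r : ℂ) - (j : ℂ) - ((0 : ℕ) : ℂ) + 1)))
            = -(2 * (2 * s + 2 * (r : ℂ) - (j : ℂ) + 1)) by push_cast; ring]
      have e1 : F (j - 1) = 1 - (q : ℂ) ^ (-(2 * (2 * s + 2 * (r : ℂ) - 2 * (j : ℂ) + 2))) := by
        simp only [hF]
        rw [Nat.cast_sub hj1, Nat.cast_one,
          show (-(2 * (2 * s + 2 * (r : ℂ) - (j : ℂ) - ((j : ℂ) - 1) + 1)))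
            = -(2 * (2 * s + 2 * (r : ℂ) - 2 * (j : ℂ) + 2)) by ring]
      rw [e0, e1]
    rw [Finset.prod_congr rfl hinner]
    apply reflect_Icc
    intro i h1 h2
    have hc : ((r + 1 - i : ℕ) : ℂ) = (r : ℂ) + 1 - (i : ℂ) := by
      rw [Nat.cast_sub (by omega), Nat.cast_add, Nat.cast_one]
    rw [hc,
      show (-(2 * (2 * s + 2 * (r : ℂ) - ((r : ℂ) + 1 - (i : ℂ)) + 1)))
        = -(2 * (2 * s + (r : ℂ) + (i : ℂ))) by ring,
      show (-(2 * (2 * s + 2 * (r : ℂ) - 2 * ((r : ℂ) + 1 - (i : ℂ)) + 2)))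
        = -(2 * (2 * s + 2 * (i : ℂ))) by ring]
  -- Step 2: the second product.
  have hSP : (∏ i ∈ Finset.Icc 1 r,
        ((q : ℂ) ^ (-(2 * s + 2 * (r : ℂ) - 2 * (i : ℂ))) - 1) /
          ((q : ℂ) * (1 - (q : ℂ) ^ (-(2 * s + 2 * (r : ℂ) - 2 * (i : ℂ) + 1)))))
      = (-1 : ℂ) ^ r * ((q : ℂ) ^ r)⁻¹ *
          ((∏ i ∈ Finset.Icc 1 r, (1 - (q : ℂ) ^ (-(2 * s + 2 * (i : ℂ) - 2)))) /
            (∏ i ∈ Finset.Icc 1 r, (1 - (q : ℂ) ^ (-(2 * s + 2 * (i : ℂ) - 1))))) := by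
    have hfac : ∀ i ∈ Finset.Icc 1 r,
        ((q : ℂ) ^ (-(2 * s + 2 * (r : ℂ) - 2 * (i : ℂ))) - 1) /
          ((q : ℂ) * (1 - (q : ℂ) ^ (-(2 * s + 2 * (r : ℂ) - 2 * (i : ℂ) + 1))))
        = ((-1 : ℂ) / (q : ℂ)) * ((1 - (q : ℂ) ^ (-(2 * s + 2 * (r : ℂ) - 2 * (i : ℂ)))) /
            (1 - (q : ℂ) ^ (-(2 * s + 2 * (r : ℂ) - 2 * (i : ℂ) + 1)))) := by
      intro i _
      rw [div_mul_div_comm]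
      congr 1
      ring
    have hN : (∏ i ∈ Finset.Icc 1 r, (1 - (q : ℂ) ^ (-(2 * s + 2 * (r : ℂ) - 2 * (i : ℂ)))))
        = ∏ i ∈ Finset.Icc 1 r, (1 - (q : ℂ) ^ (-(2 * s + 2 * (i : ℂ) - 2))) := by
      apply reflect_Icc
      intro i h1 h2
      have hc : ((r + 1 - i : ℕ) : ℂ) = (r : ℂ) + 1 - (i : ℂ) := by
        rw [Nat.cast_sub (by omega), Nat.cast_add, Nat.cast_one]
      rw [hc, show (-(2 * s + 2 * (r : ℂ) - 2 * ((r : ℂ) + 1 - (i : ℂ))))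
          = -(2 * s + 2 * (i : ℂ) - 2) by ring]
    have hDD : (∏ i ∈ Finset.Icc 1 r, (1 - (q : ℂ) ^ (-(2 * s + 2 * (r : ℂ) - 2 * (i : ℂ) + 1))))
        = ∏ i ∈ Finset.Icc 1 r, (1 - (q : ℂ) ^ (-(2 * s + 2 * (i : ℂ) - 1))) := by
      apply reflect_Icc
      intro i h1 h2
      have hc : ((r + 1 - i : ℕ) : ℂ) = (r : ℂ) + 1 - (i : ℂ) := by
        rw [Nat.cast_sub (by omega), Nat.cast_add, Nat.cast_one]
      rw [hc, show (-(2 * s + 2 * (r : ℂ) - 2 * ((r : ℂ) + 1 - (i : ℂ)) + 1))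
          = -(2 * s + 2 * (i : ℂ) - 1) by ring]
    have hcard : (Finset.Icc 1 r).card = r := by
      rw [Nat.card_Icc]
      omega
    rw [Finset.prod_congr rfl hfac, Finset.prod_mul_distrib, Finset.prod_const,
      Finset.prod_div_distrib, hN, hDD, hcard, div_pow, div_eq_mul_inv]
  -- Step 3: the shift identity.
  have hshift : (∏ i ∈ Finset.Icc 1 r, (1 - (q : ℂ) ^ (-(2 * s + 2 * (i : ℂ) - 2)))) *
        (1 - (q : ℂ) ^ (-(2 * s + 2 * (r : ℂ))))
      = (1 - (q : ℂ) ^ (-(2 * s))) *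
        ∏ i ∈ Finset.Icc 1 r, (1 - (q : ℂ) ^ (-(2 * s + 2 * (i : ℂ)))) := by
    have lhs' : (∏ i ∈ Finset.Icc 1 r, (1 - (q : ℂ) ^ (-(2 * s + 2 * (i : ℂ) - 2))))
        = ∏ i ∈ Finset.range r, (1 - (q : ℂ) ^ (-(2 * s + 2 * (i : ℂ)))) := by
      rw [← Finset.Ico_add_one_right_eq_Icc, Finset.prod_Ico_eq_prod_range]
      simp only [Nat.add_sub_cancel]
      apply Finset.prod_congr rfl
      intro i _
      rw [show (-(2 * s + 2 * ((1 + i : ℕ) : ℂ) - 2)) = -(2 * s + 2 * ((i : ℕ) : ℂ)) by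
        push_cast; ring]
    have rhs' : (∏ i ∈ Finset.Icc 1 r, (1 - (q : ℂ) ^ (-(2 * s + 2 * (i : ℂ)))))
        = ∏ i ∈ Finset.range r, (1 - (q : ℂ) ^ (-(2 * s + 2 * (((i : ℕ) : ℂ) + 1)))) := by
      rw [← Finset.Ico_add_one_right_eq_Icc, Finset.prod_Ico_eq_prod_range]
      simp only [Nat.add_sub_cancel]
      apply Finset.prod_congr rfl
      intro i _
      rw [show (-(2 * s + 2 * ((1 + i : ℕ) : ℂ))) = -(2 * s + 2 * (((i : ℕ) : ℂ) + 1)) by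
        push_cast; ring]
    rw [lhs', rhs',
      ← Finset.prod_range_succ (fun i => 1 - (q : ℂ) ^ (-(2 * s + 2 * ((i : ℕ) : ℂ)))) r,
      Finset.prod_range_succ' (fun i => 1 - (q : ℂ) ^ (-(2 * s + 2 * ((i : ℕ) : ℂ)))) r,
      mul_comm]
    congr 1
    · rw [show (-(2 * s + 2 * ((0 : ℕ) : ℂ))) = -(2 * s) by push_cast; ring]
    · apply Finset.prod_congr rfl
      intro i _
      rw [show (-(2 * s + 2 * ((i + 1 : ℕ) : ℂ))) = -(2 * s + 2 * (((i : ℕ) : ℂ) + 1)) by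
        push_cast; ring]
  -- nonvanishing facts
  have hPr : 1 - (q : ℂ) ^ (-(2 * s + 2 * (r : ℂ))) ≠ 0 := by
    rw [show (-(2 * s + 2 * (r : ℂ))) = -((2:ℂ) * s + ((2 * r : ℝ) : ℂ)) by push_cast; ring]
    exact one_sub_cpow_ne hq (by
      have : (0:ℝ) ≤ (r:ℝ) := Nat.cast_nonneg r
      simp
      linarith)
  have hD : (∏ i ∈ Finset.Icc 1 r, (1 - (q : ℂ) ^ (-(2 * s + 2 * (i : ℂ) - 1)))) ≠ 0 := by
    apply Finset.prod_ne_zero_iff.mpr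
    intro i hi
    obtain ⟨h1, _⟩ := Finset.mem_Icc.mp hi
    have h1' : (1:ℝ) ≤ (i:ℝ) := by exact_mod_cast h1
    rw [show (-(2 * s + 2 * (i : ℂ) - 1)) = -((2:ℂ) * s + ((2 * i - 1 : ℝ) : ℂ)) by
      push_cast; ring]
    exact one_sub_cpow_ne hq (by simp; linarith)
  have hmq : (-(q : ℂ)) ^ (-(r : ℤ)) = (-1 : ℂ) ^ r * ((q : ℂ) ^ r)⁻¹ := by
    rw [zpow_neg, zpow_natCast, neg_pow, mul_inv, ← inv_pow, inv_neg, inv_one]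
  have hND : (∏ i ∈ Finset.Icc 1 r, (1 - (q : ℂ) ^ (-(2 * s + 2 * (i : ℂ) - 2)))) /
        (∏ i ∈ Finset.Icc 1 r, (1 - (q : ℂ) ^ (-(2 * s + 2 * (i : ℂ) - 1))))
      = ((1 - (q : ℂ) ^ (-(2 * s))) / (1 - (q : ℂ) ^ (-(2 * s + 2 * (r : ℂ))))) *
        ((∏ i ∈ Finset.Icc 1 r, (1 - (q : ℂ) ^ (-(2 * s + 2 * (i : ℂ))))) /
          (∏ i ∈ Finset.Icc 1 r, (1 - (q : ℂ) ^ (-(2 * s + 2 * (i : ℂ) - 1))))) := by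
    rw [div_mul_div_comm, ← hshift, mul_comm
      (∏ i ∈ Finset.Icc 1 r, (1 - (q : ℂ) ^ (-(2 * s + 2 * (i : ℂ) - 2))))
      (1 - (q : ℂ) ^ (-(2 * s + 2 * (r : ℂ)))),
      mul_div_mul_left _ _ hPr]
  have hB : (∏ i ∈ Finset.Icc 1 r,
        (1 - (q : ℂ) ^ (-(2 * s + 2 * (i : ℂ)))) / (1 - (q : ℂ) ^ (-(2 * s + 2 * (i : ℂ) - 1))))
      = (∏ i ∈ Finset.Icc 1 r, (1 - (q : ℂ) ^ (-(2 * s + 2 * (i : ℂ))))) /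
          (∏ i ∈ Finset.Icc 1 r, (1 - (q : ℂ) ^ (-(2 * s + 2 * (i : ℂ) - 1)))) :=
    Finset.prod_div_distrib _ _
  rw [hDP, hSP, hND, hmq, hB]
  ring
end

section
/- Let q be a real number with q > 1, let r ≥ 1 be a natural number, and let s be a complex number with Re(s) > r. Then ∏_{1 ≤ i < j ≤ 2r} (1 − q^{−2(2s+2r−i−j+2)}) / (1 − q^{−2(2s+2r−i−j+1)}) · ∏_{i=1}^{2r} (q^{−(2s+2r−2i)} − 1) / ( q · (1 − q^{−(2s+2r−2i+1)}) ) = −q^{−2s} · ∏_{i=1}^{2r} (1 − (−1)^i q^{−(2s+i)}) / (1 − (−1)^i q^{−(2s−i+1)}) · (1 − q^{2s−2r}) / (1 − q^{−(2s+2r)}). (Under the hypothesis Re(s) > r every denominator occurring is nonzero.) -/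
open Finset

noncomputable def ff (Q w : ℂ) (e : ℕ) : ℂ := 1 - w * Q ^ e
noncomputable def gg (Q w : ℂ) (e : ℕ) : ℂ := 1 + w * Q ^ e

lemma tele (G : ℕ → ℂ) (a : ℕ) :
    ∀ n : ℕ, (∀ m : ℕ, m ≤ a + n → G m ≠ 0) →
      ∏ i ∈ range n, G (a + i) / G (a + i + 1) = G a / G (a + n) := by
  intro n
  induction n with
  | zero => intro h; simp [div_self (h a (by omega))]
  | succ n ih =>
    intro h
    rw [prod_range_succ, ih (fun m hm => h m (by omega)), div_mul_div_comm, mul_comm (G a) _,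
      mul_div_mul_left _ _ (h (a + n) (by omega)), ← add_assoc]

lemma prod_range_two_mul (f : ℕ → ℂ) (n : ℕ) :
    ∏ k ∈ range (2 * n), f k = ∏ a ∈ range n, (f (2 * a) * f (2 * a + 1)) := by
  induction n with
  | zero => simp
  | succ n ih =>
    rw [prod_range_succ, ← ih, show 2 * (n + 1) = 2 * n + 1 + 1 by ring,
      prod_range_succ, prod_range_succ, mul_assoc]

lemma neg_one_pow_sub (r i : ℕ) (hi : i < 2 * r) :
    ((-1 : ℂ)) ^ (2 * r - 1 - i) = -(-1 : ℂ) ^ i := by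
  have h1 : ((-1 : ℂ)) ^ (2 * r - 1 - i) * (-1 : ℂ) ^ i = -1 := by
    rw [← pow_add, show 2 * r - 1 - i + i = 2 * r - 1 by omega]
    exact Odd.neg_one_pow ⟨r - 1, by omega⟩
  have h2 : ((-1 : ℂ)) ^ i * (-1 : ℂ) ^ i = 1 := by
    rw [← pow_add]; exact Even.neg_one_pow ⟨i, rfl⟩
  calc ((-1 : ℂ)) ^ (2 * r - 1 - i)
      = ((-1 : ℂ)) ^ (2 * r - 1 - i) * ((-1 : ℂ) ^ i * (-1 : ℂ) ^ i) := by rw [h2, mul_one]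
    _ = -(-1 : ℂ) ^ i := by rw [← mul_assoc, h1]; ring

lemma prod_shift (F G : ℕ → ℂ) (r : ℕ) (hFG : ∀ a : ℕ, F (r + a) = G a) :
    ∏ x ∈ range (r + r), F x = (∏ x ∈ range r, F x) * ∏ a ∈ range r, G a := by
  rw [Finset.prod_range_add]
  exact congrArg _ (prod_congr rfl fun a _ => hFG a)

lemma ffcongr (Q w : ℂ) {e e' : ℕ} (h : e = e') : ff Q w e = ff Q w e' := by rw [h]

lemma fgcongr (Q w : ℂ) {e e' : ℕ} (h : e = e') :
    ff Q w e * gg Q w e = ff Q w e' * gg Q w e' := by rw [h]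

lemma key (Q w : ℂ) (r : ℕ) (hQ : Q ≠ 0) (hw : w ≠ 0)
    (hf : ∀ e : ℕ, e ≤ 4 * r → 1 - w * Q ^ e ≠ 0)
    (hg : ∀ e : ℕ, e ≤ 4 * r → 1 + w * Q ^ e ≠ 0) :
    (∏ j ∈ range (2 * r), ∏ i ∈ range j,
        (1 - w ^ 2 * Q ^ (2 * (i + j))) / (1 - w ^ 2 * Q ^ (2 * (i + j) + 2))) *
      (∏ i ∈ range (2 * r), (w * Q ^ (2 * i + 2) - 1) / (Q * (1 - w * Q ^ (2 * i + 1)))) =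
    -(w * Q ^ (2 * r)) *
      (∏ i ∈ range (2 * r),
        (1 + (-1 : ℂ) ^ i * w * Q ^ (2 * r - 1 - i)) /
          (1 + (-1 : ℂ) ^ i * w * Q ^ (2 * r + i))) *
      ((1 - (w * Q ^ (4 * r))⁻¹) / (1 - w)) := by
  have hff : ∀ e : ℕ, e ≤ 4 * r → ff Q w e ≠ 0 := hf
  have hgg : ∀ e : ℕ, e ≤ 4 * r → gg Q w e ≠ 0 := hg
  -- Step 1 : double product
  have hdouble : (∏ j ∈ range (2 * r), ∏ i ∈ range j,
        (1 - w ^ 2 * Q ^ (2 * (i + j))) / (1 - w ^ 2 * Q ^ (2 * (i + j) + 2)))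
      = (∏ j ∈ range (2 * r), ff Q w j * gg Q w j) /
        (∏ j ∈ range (2 * r), ff Q w (2 * j) * gg Q w (2 * j)) := by
    rw [← prod_div_distrib]
    refine prod_congr rfl fun j hj => ?_
    have hj' : j < 2 * r := mem_range.mp hj
    have step : (∏ i ∈ range j, (1 - w ^ 2 * Q ^ (2 * (i + j))) / (1 - w ^ 2 * Q ^ (2 * (i + j) + 2)))
        = ∏ i ∈ range j, (fun m => ff Q w m * gg Q w m) (j + i) /
            (fun m => ff Q w m * gg Q w m) (j + i + 1) := by
      refine prod_congr rfl fun i _ => ?_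
      simp only [ff, gg]
      congr 1 <;> ring
    rw [step, tele (fun m => ff Q w m * gg Q w m) j j
      (fun m hm => mul_ne_zero (hff m (by omega)) (hgg m (by omega))),
      show j + j = 2 * j from (two_mul j).symm]
  -- Step 2 : second product
  have hB : (∏ i ∈ range (2 * r), (w * Q ^ (2 * i + 2) - 1) / (Q * (1 - w * Q ^ (2 * i + 1))))
      = (1 / Q ^ (2 * r)) *
        ((∏ i ∈ range (2 * r), ff Q w (2 * i + 2)) / (∏ i ∈ range (2 * r), ff Q w (2 * i + 1))) := by
    have step : (∏ i ∈ range (2 * r), (w * Q ^ (2 * i + 2) - 1) / (Q * (1 - w * Q ^ (2 * i + 1))))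
        = ∏ i ∈ range (2 * r), ((-1 / Q) * (ff Q w (2 * i + 2) / ff Q w (2 * i + 1))) := by
      refine prod_congr rfl fun i _ => ?_
      simp only [ff]
      rw [div_mul_div_comm]; ring_nf
    rw [step, prod_mul_distrib, prod_const, card_range, prod_div_distrib,
      show (-1 / Q) ^ (2 * r) = 1 / Q ^ (2 * r) by
        rw [div_pow]; congr 1; exact Even.neg_one_pow ⟨r, two_mul r⟩]
  -- Step 3 : RHS numerator product
  have hnum : (∏ i ∈ range (2 * r), (1 + (-1 : ℂ) ^ i * w * Q ^ (2 * r - 1 - i)))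
      = (∏ a ∈ range r, ff Q w (2 * a)) * (∏ a ∈ range r, gg Q w (2 * a + 1)) := by
    have step : (∏ i ∈ range (2 * r), (1 + (-1 : ℂ) ^ i * w * Q ^ (2 * r - 1 - i)))
        = ∏ i ∈ range (2 * r), (fun k => 1 - (-1 : ℂ) ^ k * w * Q ^ k) (2 * r - 1 - i) := by
      refine prod_congr rfl fun i hi => ?_
      have hi' : i < 2 * r := mem_range.mp hi
      simp only
      rw [neg_one_pow_sub r i hi']
      ring
    rw [step, prod_range_reflect (fun k => 1 - (-1 : ℂ) ^ k * w * Q ^ k) (2 * r),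
      prod_range_two_mul (fun k => 1 - (-1 : ℂ) ^ k * w * Q ^ k) r, ← prod_mul_distrib]
    refine prod_congr rfl fun a _ => ?_
    have e1 : ((-1 : ℂ)) ^ (2 * a) = 1 := by rw [pow_mul]; norm_num
    have e2 : ((-1 : ℂ)) ^ (2 * a + 1) = -1 := by rw [pow_succ, e1]; ring
    simp only [ff, gg, e1, e2]
    ring
  -- Step 4 : RHS denominator product
  have hden : (∏ i ∈ range (2 * r), (1 + (-1 : ℂ) ^ i * w * Q ^ (2 * r + i)))
      = (∏ a ∈ range r, gg Q w (2 * r + 2 * a)) * (∏ a ∈ range r, ff Q w (2 * r + 2 * a + 1)) := by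
    rw [prod_range_two_mul (fun k => 1 + (-1 : ℂ) ^ k * w * Q ^ (2 * r + k)) r, ← prod_mul_distrib]
    refine prod_congr rfl fun a _ => ?_
    have e1 : ((-1 : ℂ)) ^ (2 * a) = 1 := by rw [pow_mul]; norm_num
    have e2 : ((-1 : ℂ)) ^ (2 * a + 1) = -1 := by rw [pow_succ, e1]; ring
    simp only [ff, gg, e1, e2, show 2 * r + (2 * a + 1) = 2 * r + 2 * a + 1 by ring]
    ring
  -- splits
  have hsplitPG : (∏ j ∈ range (2 * r), ff Q w j * gg Q w j)
      = ((∏ a ∈ range r, ff Q w (2 * a)) * (∏ a ∈ range r, gg Q w (2 * a))) *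
        ((∏ a ∈ range r, ff Q w (2 * a + 1)) * (∏ a ∈ range r, gg Q w (2 * a + 1))) := by
    rw [prod_range_two_mul (fun j => ff Q w j * gg Q w j) r, ← prod_mul_distrib,
      ← prod_mul_distrib, ← prod_mul_distrib]
  have hsplit2 : (∏ j ∈ range (2 * r), ff Q w (2 * j) * gg Q w (2 * j))
      = ((∏ a ∈ range r, ff Q w (2 * a)) * (∏ a ∈ range r, gg Q w (2 * a))) *
        ((∏ a ∈ range r, ff Q w (2 * r + 2 * a)) * (∏ a ∈ range r, gg Q w (2 * r + 2 * a))) := by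
    have h := prod_shift (fun j => ff Q w (2 * j) * gg Q w (2 * j))
      (fun a => ff Q w (2 * r + 2 * a) * gg Q w (2 * r + 2 * a)) r
      (fun a => fgcongr Q w (by ring))
    rw [show r + r = 2 * r from (two_mul r).symm] at h
    rw [h, prod_mul_distrib, prod_mul_distrib]
  have hsplitE : (∏ i ∈ range (2 * r), ff Q w (2 * i + 2))
      = (∏ a ∈ range r, ff Q w (2 * a + 2)) * (∏ a ∈ range r, ff Q w (2 * r + 2 * a + 2)) := by
    have h := prod_shift (fun j => ff Q w (2 * j + 2)) (fun a => ff Q w (2 * r + 2 * a + 2)) r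
      (fun a => ffcongr Q w (by ring))
    rw [show r + r = 2 * r from (two_mul r).symm] at h
    rw [h]
  have hsplitF1 : (∏ i ∈ range (2 * r), ff Q w (2 * i + 1))
      = (∏ a ∈ range r, ff Q w (2 * a + 1)) * (∏ a ∈ range r, ff Q w (2 * r + 2 * a + 1)) := by
    have h := prod_shift (fun j => ff Q w (2 * j + 1)) (fun a => ff Q w (2 * r + 2 * a + 1)) r
      (fun a => ffcongr Q w (by ring))
    rw [show r + r = 2 * r from (two_mul r).symm] at h
    rw [h]
  -- telescoping identity
  have hT : ff Q w 0 * ((∏ a ∈ range r, ff Q w (2 * a + 2)) * (∏ a ∈ range r, ff Q w (2 * r + 2 * a + 2)))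
      = ff Q w (4 * r) * ((∏ a ∈ range r, ff Q w (2 * a)) * (∏ a ∈ range r, ff Q w (2 * r + 2 * a))) := by
    have h1 : (∏ a ∈ range r, ff Q w (2 * a + 2)) * (∏ a ∈ range r, ff Q w (2 * r + 2 * a + 2))
        = ∏ a ∈ range (2 * r), ff Q w (2 * a + 2) := by
      have h := prod_shift (fun j => ff Q w (2 * j + 2)) (fun a => ff Q w (2 * r + 2 * a + 2)) r
        (fun a => ffcongr Q w (by ring))
      rw [show r + r = 2 * r from (two_mul r).symm] at h
      rw [h]
    have h2 : (∏ a ∈ range r, ff Q w (2 * a)) * (∏ a ∈ range r, ff Q w (2 * r + 2 * a))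
        = ∏ a ∈ range (2 * r), ff Q w (2 * a) := by
      have h := prod_shift (fun j => ff Q w (2 * j)) (fun a => ff Q w (2 * r + 2 * a)) r
        (fun a => ffcongr Q w (by ring))
      rw [show r + r = 2 * r from (two_mul r).symm] at h
      rw [h]
    rw [h1, h2]
    calc ff Q w 0 * ∏ a ∈ range (2 * r), ff Q w (2 * a + 2)
        = (∏ k ∈ range (2 * r), (fun a => ff Q w (2 * a)) (k + 1)) * ff Q w 0 := by
          rw [mul_comm]
          exact congrArg (· * ff Q w 0) (prod_congr rfl fun k _ => ffcongr Q w (by ring))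
      _ = ∏ k ∈ range (2 * r + 1), ff Q w (2 * k) := (prod_range_succ' (fun a => ff Q w (2 * a)) (2 * r)).symm
      _ = (∏ k ∈ range (2 * r), ff Q w (2 * k)) * ff Q w (2 * (2 * r)) := prod_range_succ _ _
      _ = ff Q w (4 * r) * ∏ k ∈ range (2 * r), ff Q w (2 * k) := by
          rw [mul_comm, show 2 * (2 * r) = 4 * r by ring]
  -- assemble
  rw [hdouble, hB, prod_div_distrib, hnum, hden, hsplitPG, hsplit2, hsplitE, hsplitF1]
  have hF0 : (∏ a ∈ range r, ff Q w (2 * a)) ≠ 0 :=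
    prod_ne_zero_iff.mpr fun a ha => hff _ (by have := mem_range.mp ha; omega)
  have hG0 : (∏ a ∈ range r, gg Q w (2 * a)) ≠ 0 :=
    prod_ne_zero_iff.mpr fun a ha => hgg _ (by have := mem_range.mp ha; omega)
  have hF1 : (∏ a ∈ range r, ff Q w (2 * a + 1)) ≠ 0 :=
    prod_ne_zero_iff.mpr fun a ha => hff _ (by have := mem_range.mp ha; omega)
  have hG1 : (∏ a ∈ range r, gg Q w (2 * a + 1)) ≠ 0 :=
    prod_ne_zero_iff.mpr fun a ha => hgg _ (by have := mem_range.mp ha; omega)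
  have hF0' : (∏ a ∈ range r, ff Q w (2 * r + 2 * a)) ≠ 0 :=
    prod_ne_zero_iff.mpr fun a ha => hff _ (by have := mem_range.mp ha; omega)
  have hG0' : (∏ a ∈ range r, gg Q w (2 * r + 2 * a)) ≠ 0 :=
    prod_ne_zero_iff.mpr fun a ha => hgg _ (by have := mem_range.mp ha; omega)
  have hF1' : (∏ a ∈ range r, ff Q w (2 * r + 2 * a + 1)) ≠ 0 :=
    prod_ne_zero_iff.mpr fun a ha => hff _ (by have := mem_range.mp ha; omega)
  have hE1 : (∏ a ∈ range r, ff Q w (2 * a + 2)) ≠ 0 :=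
    prod_ne_zero_iff.mpr fun a ha => hff _ (by have := mem_range.mp ha; omega)
  have hE2 : (∏ a ∈ range r, ff Q w (2 * r + 2 * a + 2)) ≠ 0 :=
    prod_ne_zero_iff.mpr fun a ha => hff _ (by have := mem_range.mp ha; omega)
  have hf0 : ff Q w 0 = 1 - w := by simp [ff]
  have hf4r : ff Q w (4 * r) = 1 - w * Q ^ (4 * r) := rfl
  have h1w : (1 - w) ≠ 0 := by rw [← hf0]; exact hff 0 (by omega)
  have hQpow : Q ^ (2 * r) ≠ 0 := pow_ne_zero _ hQ
  have hwQ : w * Q ^ (4 * r) ≠ 0 := mul_ne_zero hw (pow_ne_zero _ hQ)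
  have hf00 : ff Q w 0 ≠ 0 := hff 0 (by omega)
  have hE2eq : (∏ a ∈ range r, ff Q w (2 * r + 2 * a + 2))
      = ff Q w (4 * r) * ((∏ a ∈ range r, ff Q w (2 * a)) * (∏ a ∈ range r, ff Q w (2 * r + 2 * a)))
        / (ff Q w 0 * (∏ a ∈ range r, ff Q w (2 * a + 2))) := by
    rw [eq_div_iff (mul_ne_zero hf00 hE1)]
    linear_combination hT
  rw [hE2eq, hf0, hf4r]
  field_simp [hF0, hG0, hF1, hG1, hF0', hG0', hF1', hE1, h1w, hQpow]
  have hD : (((∏ x ∈ range r, ff Q w (2 * x)) * ∏ x ∈ range r, gg Q w (2 * x)) *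
        ((∏ x ∈ range r, ff Q w (2 * r + 2 * x)) * ∏ x ∈ range r, gg Q w (2 * r + 2 * x)) *
      (Q ^ (2 * r) * (((1 - w) * ∏ x ∈ range r, ff Q w (2 * x + 2)) *
          ((∏ x ∈ range r, ff Q w (2 * x + 1)) * ∏ x ∈ range r, ff Q w (2 * r + 2 * x + 1))))) ≠ 0 := by
    apply_rules [mul_ne_zero, hF0, hG0, hF0', hG0', hQpow, h1w, hE1, hF1, hF1']
  ring


/-- Evaluation (from the proof of Lemma 5.4) of the scalar by which the
unnormalized intertwining operator `M(s)` acts on the almost-unramified section: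
for real `q > 1`, natural `r ≥ 1`, and complex `s` with `Re s > r`,
`∏_{1 ≤ i < j ≤ 2r} (1 − q^{−2(2s+2r−i−j+2)})/(1 − q^{−2(2s+2r−i−j+1)})
  · ∏_{i=1}^{2r} (q^{−(2s+2r−2i)} − 1)/(q(1 − q^{−(2s+2r−2i+1)}))
= −q^{−2s} · ∏_{i=1}^{2r} (1 − (−1)^i q^{−(2s+i)})/(1 − (−1)^i q^{−(2s−i+1)})
  · (1 − q^{2s−2r})/(1 − q^{−(2s+2r)})`. -/
theorem stmt_3 (q : ℝ) (hq : 1 < q) (r : ℕ) (hr : 1 ≤ r) (s : ℂ) (hs : (r : ℝ) < s.re) :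
    (∏ j ∈ Finset.Icc 1 (2 * r), ∏ i ∈ Finset.Ico 1 j,
        (1 - (q : ℂ) ^ (-(2 * (2 * s + 2 * (r : ℂ) - (i : ℂ) - (j : ℂ) + 2)))) /
          (1 - (q : ℂ) ^ (-(2 * (2 * s + 2 * (r : ℂ) - (i : ℂ) - (j : ℂ) + 1))))) *
      (∏ i ∈ Finset.Icc 1 (2 * r),
        ((q : ℂ) ^ (-(2 * s + 2 * (r : ℂ) - 2 * (i : ℂ))) - 1) /
          ((q : ℂ) * (1 - (q : ℂ) ^ (-(2 * s + 2 * (r : ℂ) - 2 * (i : ℂ) + 1))))) =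
    -(q : ℂ) ^ (-(2 * s)) *
      (∏ i ∈ Finset.Icc 1 (2 * r),
        (1 - (-1 : ℂ) ^ i * (q : ℂ) ^ (-(2 * s + (i : ℂ)))) /
          (1 - (-1 : ℂ) ^ i * (q : ℂ) ^ (-(2 * s - (i : ℂ) + 1)))) *
      ((1 - (q : ℂ) ^ (2 * s - 2 * (r : ℂ))) / (1 - (q : ℂ) ^ (-(2 * s + 2 * (r : ℂ))))) := by
  have hqpos : (0 : ℝ) < q := by linarith
  have hq0 : (q : ℂ) ≠ 0 := Complex.ofReal_ne_zero.mpr (by linarith)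
  set w : ℂ := (q : ℂ) ^ (-(2 * s + 2 * (r : ℂ))) with hw_def
  have hpow : ∀ n : ℕ, (q : ℂ) ^ (-(2 * s + 2 * (r : ℂ)) + (n : ℂ)) = w * (q : ℂ) ^ n :=
    fun n => by rw [Complex.cpow_add _ _ hq0, Complex.cpow_natCast, hw_def]
  have hpow2 : ∀ n : ℕ,
      (q : ℂ) ^ (-(2 * s + 2 * (r : ℂ)) + (-(2 * s + 2 * (r : ℂ)) + (n : ℂ)))
        = w * (w * (q : ℂ) ^ n) :=
    fun n => by rw [Complex.cpow_add _ _ hq0, hpow n, hw_def]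
  have habsw : ‖w‖ = q ^ (-(2 * s.re + 2 * (r : ℝ))) := by
    rw [hw_def, Complex.norm_cpow_eq_rpow_re_of_pos hqpos]
    congr 1
    simp [Complex.add_re, Complex.mul_re]
  have habs : ∀ e : ℕ, e ≤ 4 * r → ‖w * (q : ℂ) ^ e‖ < 1 := by
    intro e he
    rw [norm_mul, norm_pow, habsw, Complex.norm_real, Real.norm_eq_abs, abs_of_pos hqpos,
      ← Real.rpow_natCast q e, ← Real.rpow_add hqpos]
    refine Real.rpow_lt_one_of_one_lt_of_neg hq ?_
    have h1 : (e : ℝ) ≤ 4 * r := by exact_mod_cast he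
    have h2 : (r : ℝ) < s.re := hs
    linarith
  have hf : ∀ e : ℕ, e ≤ 4 * r → 1 - w * (q : ℂ) ^ e ≠ 0 := by
    intro e he h
    have h1 : w * (q : ℂ) ^ e = 1 := by linear_combination -h
    have := habs e he
    rw [h1] at this
    simp at this
  have hg : ∀ e : ℕ, e ≤ 4 * r → 1 + w * (q : ℂ) ^ e ≠ 0 := by
    intro e he h
    have h1 : w * (q : ℂ) ^ e = -1 := by linear_combination h
    have := habs e he
    rw [h1] at this
    simp at this
  have hw0 : w ≠ 0 := by
    intro h
    have := habsw
    rw [h] at this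
    simp only [norm_zero] at this
    exact absurd this.symm (ne_of_gt (Real.rpow_pos_of_pos hqpos _))
  -- LHS first product
  have hL1 : (∏ j ∈ Finset.Icc 1 (2 * r), ∏ i ∈ Finset.Ico 1 j,
        (1 - (q : ℂ) ^ (-(2 * (2 * s + 2 * (r : ℂ) - (i : ℂ) - (j : ℂ) + 2)))) /
          (1 - (q : ℂ) ^ (-(2 * (2 * s + 2 * (r : ℂ) - (i : ℂ) - (j : ℂ) + 1)))))
      = ∏ j ∈ Finset.range (2 * r), ∏ i ∈ Finset.range j,
        (1 - w ^ 2 * (q : ℂ) ^ (2 * (i + j))) / (1 - w ^ 2 * (q : ℂ) ^ (2 * (i + j) + 2)) := by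
    rw [← Finset.Ico_add_one_right_eq_Icc, Finset.prod_Ico_eq_prod_range]
    refine Finset.prod_congr rfl fun j _ => ?_
    rw [Finset.prod_Ico_eq_prod_range]
    simp only [Nat.add_sub_cancel_left]
    refine Finset.prod_congr rfl fun i _ => ?_
    have e1 : (-(2 * (2 * s + 2 * (r : ℂ) - ((1 + i : ℕ) : ℂ) - ((1 + j : ℕ) : ℂ) + 2)))
        = -(2 * s + 2 * (r : ℂ)) + (-(2 * s + 2 * (r : ℂ)) + ((2 * (i + j) : ℕ) : ℂ)) := by
      push_cast; ring
    have e2 : (-(2 * (2 * s + 2 * (r : ℂ) - ((1 + i : ℕ) : ℂ) - ((1 + j : ℕ) : ℂ) + 1)))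
        = -(2 * s + 2 * (r : ℂ)) + (-(2 * s + 2 * (r : ℂ)) + ((2 * (i + j) + 2 : ℕ) : ℂ)) := by
      push_cast; ring
    rw [e1, e2, hpow2, hpow2]
    congr 1 <;> ring
  -- LHS second product
  have hL2 : (∏ i ∈ Finset.Icc 1 (2 * r),
        ((q : ℂ) ^ (-(2 * s + 2 * (r : ℂ) - 2 * (i : ℂ))) - 1) /
          ((q : ℂ) * (1 - (q : ℂ) ^ (-(2 * s + 2 * (r : ℂ) - 2 * (i : ℂ) + 1)))))
      = ∏ i ∈ Finset.range (2 * r),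
        (w * (q : ℂ) ^ (2 * i + 2) - 1) / ((q : ℂ) * (1 - w * (q : ℂ) ^ (2 * i + 1))) := by
    rw [← Finset.Ico_add_one_right_eq_Icc, Finset.prod_Ico_eq_prod_range]
    refine Finset.prod_congr rfl fun i _ => ?_
    have e1 : (-(2 * s + 2 * (r : ℂ) - 2 * ((1 + i : ℕ) : ℂ)))
        = -(2 * s + 2 * (r : ℂ)) + ((2 * i + 2 : ℕ) : ℂ) := by push_cast; ring
    have e2 : (-(2 * s + 2 * (r : ℂ) - 2 * ((1 + i : ℕ) : ℂ) + 1))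
        = -(2 * s + 2 * (r : ℂ)) + ((2 * i + 1 : ℕ) : ℂ) := by push_cast; ring
    rw [e1, e2, hpow, hpow]
  -- RHS product
  have hR : (∏ i ∈ Finset.Icc 1 (2 * r),
        (1 - (-1 : ℂ) ^ i * (q : ℂ) ^ (-(2 * s + (i : ℂ)))) /
          (1 - (-1 : ℂ) ^ i * (q : ℂ) ^ (-(2 * s - (i : ℂ) + 1))))
      = ∏ i ∈ Finset.range (2 * r),
        (1 + (-1 : ℂ) ^ i * w * (q : ℂ) ^ (2 * r - 1 - i)) /
          (1 + (-1 : ℂ) ^ i * w * (q : ℂ) ^ (2 * r + i)) := by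
    rw [← Finset.Ico_add_one_right_eq_Icc, Finset.prod_Ico_eq_prod_range]
    refine Finset.prod_congr rfl fun i hi => ?_
    have hi' : i < 2 * r := Finset.mem_range.mp hi
    have c1 : ((2 * r - 1 - i : ℕ) : ℂ) = 2 * (r : ℂ) - 1 - (i : ℂ) := by
      rw [Nat.cast_sub (by omega), Nat.cast_sub (by omega)]
      push_cast; ring
    have e1 : (-(2 * s + ((1 + i : ℕ) : ℂ)))
        = -(2 * s + 2 * (r : ℂ)) + ((2 * r - 1 - i : ℕ) : ℂ) := by
      rw [c1]; push_cast; ring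
    have e2 : (-(2 * s - ((1 + i : ℕ) : ℂ) + 1))
        = -(2 * s + 2 * (r : ℂ)) + ((2 * r + i : ℕ) : ℂ) := by push_cast; ring
    have e3 : ((-1 : ℂ)) ^ (1 + i) = -(-1 : ℂ) ^ i := by rw [pow_add]; ring
    rw [e1, e2, hpow, hpow, e3]
    congr 1 <;> ring
  -- scalars
  have hS1 : (-(q : ℂ) ^ (-(2 * s))) = -(w * (q : ℂ) ^ (2 * r)) := by
    rw [show (-(2 * s)) = -(2 * s + 2 * (r : ℂ)) + ((2 * r : ℕ) : ℂ) by push_cast; ring, hpow]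
  have hS2 : (q : ℂ) ^ (2 * s - 2 * (r : ℂ)) = (w * (q : ℂ) ^ (4 * r))⁻¹ := by
    rw [show (2 * s - 2 * (r : ℂ)) = -(-(2 * s + 2 * (r : ℂ)) + ((4 * r : ℕ) : ℂ)) by
      push_cast; ring, Complex.cpow_neg, hpow]
  rw [hL1, hL2, hR, hS1, hS2]
  exact key (q : ℂ) w r hq0 hw0 hf hg
end

section
/- Let q be a real number with q > 1, let r ≥ 1 be a natural number, and let s be a complex number with Re(s) > r. Then ∏_{j=1}^{2r} (1 − q^{−2(2s+2r−j+1)}) / (1 − q^{−2(2s+2r−2j+2)}) · ∏_{i=1}^{2r} (1 − q^{−(2s+2r−2i)}) / (1 − q^{−(2s+2r−2i+1)}) = ∏_{i=1}^{2r} (1 − (−1)^i q^{−(2s+i)}) / (1 − (−1)^i q^{−(2s−i+1)}) · (1 − q^{−(2s−2r)}) / (1 − q^{−(2s+2r)}). (Under the hypothesis Re(s) > r every denominator occurring is nonzero.) -/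
open Finset

namespace Stmt4Aux

/-- `ff q s k = 1 - q^{-2s} q^k`. -/
noncomputable def ff (q : ℝ) (s : ℂ) (k : ℤ) : ℂ := 1 - (q : ℂ) ^ (-(2 * s)) * (q : ℂ) ^ k

/-- `gg q s k = 1 + q^{-2s} q^k`. -/
noncomputable def gg (q : ℝ) (s : ℂ) (k : ℤ) : ℂ := 1 + (q : ℂ) ^ (-(2 * s)) * (q : ℂ) ^ k

lemma cpow_int {q : ℝ} (hq0 : 0 < q) (z : ℂ) (k : ℤ) :
    (q : ℂ) ^ (z + (k : ℂ)) = (q : ℂ) ^ z * (q : ℂ) ^ k := by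
  have hQ : (q : ℂ) ≠ 0 := Complex.ofReal_ne_zero.mpr hq0.ne'
  rw [Complex.cpow_add _ _ hQ, Complex.cpow_intCast]

lemma one_sub {q : ℝ} (hq0 : 0 < q) (s : ℂ) (k : ℤ) :
    1 - (q : ℂ) ^ (-(2 * s) + (k : ℂ)) = ff q s k := by
  rw [cpow_int hq0]; rfl

lemma one_add {q : ℝ} (hq0 : 0 < q) (s : ℂ) (k : ℤ) :
    1 + (q : ℂ) ^ (-(2 * s) + (k : ℂ)) = gg q s k := by
  rw [cpow_int hq0]; rfl

lemma ffgg {q : ℝ} (hq0 : 0 < q) (s : ℂ) (k : ℤ) :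
    1 - (q : ℂ) ^ (-(4 * s) + ((2 * k : ℤ) : ℂ)) = ff q s k * gg q s k := by
  have hQ : (q : ℂ) ≠ 0 := Complex.ofReal_ne_zero.mpr hq0.ne'
  rw [cpow_int hq0]
  have h2 : (q : ℂ) ^ (2 * k) = (q : ℂ) ^ k * (q : ℂ) ^ k := by
    rw [two_mul, zpow_add₀ hQ]
  have h4 : (q : ℂ) ^ (-(4 * s)) = (q : ℂ) ^ (-(2 * s)) * (q : ℂ) ^ (-(2 * s)) := by
    rw [← Complex.cpow_add _ _ hQ]; ring_nf
  rw [h2, h4, ff, gg]; ring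

lemma abs_lt {q : ℝ} (hq : 1 < q) {s : ℂ} {k : ℤ} (hk : (k : ℝ) < 2 * s.re) :
    ‖(q : ℂ) ^ (-(2 * s)) * (q : ℂ) ^ k‖ < 1 := by
  have hq0 : (0 : ℝ) < q := one_pos.trans hq
  rw [norm_mul, Complex.norm_cpow_eq_rpow_re_of_pos hq0]
  have h1 : ‖(q : ℂ) ^ k‖ = q ^ (k : ℝ) := by
    rw [← Complex.ofReal_zpow, Complex.norm_real, Real.norm_eq_abs, abs_of_pos (zpow_pos hq0 k),
      ← Real.rpow_intCast]
  rw [h1, ← Real.rpow_add hq0]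
  apply Real.rpow_lt_one_of_one_lt_of_neg hq
  have h2 : (-(2 * s)).re = -(2 * s.re) := by simp
  rw [h2]; linarith

lemma ff_ne {q : ℝ} (hq : 1 < q) {s : ℂ} {k : ℤ} (hk : (k : ℝ) < 2 * s.re) :
    ff q s k ≠ 0 := by
  intro h0
  have h := abs_lt hq hk (s := s)
  rw [ff, sub_eq_zero] at h0
  rw [← h0] at h
  simp at h

lemma gg_ne {q : ℝ} (hq : 1 < q) {s : ℂ} {k : ℤ} (hk : (k : ℝ) < 2 * s.re) :
    gg q s k ≠ 0 := by
  intro h0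
  have h := abs_lt hq hk (s := s)
  have h1 : (q : ℂ) ^ (-(2 * s)) * (q : ℂ) ^ k = -1 := by
    rw [gg] at h0; linear_combination h0
  rw [h1] at h
  simp at h

lemma prod_Icc_one (F : ℕ → ℂ) (n : ℕ) :
    ∏ j ∈ Finset.Icc 1 n, F j = ∏ j ∈ Finset.range n, F (j + 1) := by
  rw [← Finset.Ico_add_one_right_eq_Icc, Finset.prod_Ico_eq_prod_range]
  exact Finset.prod_congr (by norm_num) fun j _ => by rw [Nat.add_comm]

lemma pairS (F : ℕ → ℂ) (N : ℕ) :
    ∏ j ∈ Finset.range (2 * N), F j = ∏ m ∈ Finset.range N, (F (2 * m) * F (2 * m + 1)) := by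
  induction N with
  | zero => simp
  | succ N ih =>
    rw [show 2 * (N + 1) = 2 * N + 1 + 1 by ring, Finset.prod_range_succ, Finset.prod_range_succ,
      ih, Finset.prod_range_succ, mul_assoc]

lemma telescope (F : ℤ → ℂ) (d : ℤ) (N : ℕ) :
    (∏ m ∈ Finset.range N, F (d * (m : ℤ) + d)) * F 0 =
      (∏ m ∈ Finset.range N, F (d * (m : ℤ))) * F (d * (N : ℤ)) := by
  induction N with
  | zero => simp
  | succ N ih =>
    rw [Finset.prod_range_succ, Finset.prod_range_succ,
      show (((N + 1 : ℕ)) : ℤ) = (N : ℤ) + 1 by push_cast; ring,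
      show d * ((N : ℤ) + 1) = d * (N : ℤ) + d by ring]
    linear_combination F (d * (N : ℤ) + d) * ih

end Stmt4Aux

open Finset Stmt4Aux in
/-- The intermediate rearrangement in the proof of Lemma 5.4:
`∏_{j=1}^{2r} (1 − q^{−2(2s+2r−j+1)})/(1 − q^{−2(2s+2r−2j+2)})
  · ∏_{i=1}^{2r} (1 − q^{−(2s+2r−2i)})/(1 − q^{−(2s+2r−2i+1)})
= ∏_{i=1}^{2r} (1 − (−1)^i q^{−(2s+i)})/(1 − (−1)^i q^{−(2s−i+1)})
  · (1 − q^{−(2s−2r)})/(1 − q^{−(2s+2r)})`. -/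
theorem stmt_4 (q : ℝ) (hq : 1 < q) (r : ℕ) (hr : 1 ≤ r) (s : ℂ) (hs : (r : ℝ) < s.re) :
    (∏ j ∈ Finset.Icc 1 (2 * r),
        (1 - (q : ℂ) ^ (-(2 * (2 * s + 2 * (r : ℂ) - (j : ℂ) + 1)))) /
          (1 - (q : ℂ) ^ (-(2 * (2 * s + 2 * (r : ℂ) - 2 * (j : ℂ) + 2))))) *
      (∏ i ∈ Finset.Icc 1 (2 * r),
        (1 - (q : ℂ) ^ (-(2 * s + 2 * (r : ℂ) - 2 * (i : ℂ)))) /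
          (1 - (q : ℂ) ^ (-(2 * s + 2 * (r : ℂ) - 2 * (i : ℂ) + 1)))) =
    (∏ i ∈ Finset.Icc 1 (2 * r),
        (1 - (-1 : ℂ) ^ i * (q : ℂ) ^ (-(2 * s + (i : ℂ)))) /
          (1 - (-1 : ℂ) ^ i * (q : ℂ) ^ (-(2 * s - (i : ℂ) + 1)))) *
      ((1 - (q : ℂ) ^ (-(2 * s - 2 * (r : ℂ)))) / (1 - (q : ℂ) ^ (-(2 * s + 2 * (r : ℂ))))) := by
  have hq0 : (0:ℝ) < q := one_pos.trans hq
  -- ## Component 1: the first numerator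
  have hP1num : (∏ j ∈ Finset.Icc 1 (2 * r),
        (1 - (q : ℂ) ^ (-(2 * (2 * s + 2 * (r : ℂ) - (j : ℂ) + 1))))) =
      ((∏ m ∈ range r, ff q s (-2*(m:ℤ) + -1)) * (∏ m ∈ range r, gg q s (-2*(m:ℤ) + -1))) *
      ((∏ m ∈ range r, ff q s (-2*(m:ℤ) + -2)) * (∏ m ∈ range r, gg q s (-2*(m:ℤ) + -2))) := by
    calc ∏ j ∈ Finset.Icc 1 (2 * r), (1 - (q : ℂ) ^ (-(2 * (2 * s + 2 * (r : ℂ) - (j : ℂ) + 1))))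
        = ∏ j ∈ range (2*r), (1 - (q : ℂ) ^ (-(2 * (2 * s + 2 * (r : ℂ) - ((j+1 : ℕ) : ℂ) + 1)))) :=
          prod_Icc_one _ _
      _ = ∏ j ∈ range (2*r), (ff q s ((j:ℤ) - 2*(r:ℤ)) * gg q s ((j:ℤ) - 2*(r:ℤ))) := by
          refine Finset.prod_congr rfl fun j hj => ?_
          rw [show (-(2 * (2 * s + 2 * (r : ℂ) - ((j+1 : ℕ) : ℂ) + 1))) =
              -(4*s) + ((2*((j:ℤ) - 2*(r:ℤ)) : ℤ) : ℂ) by push_cast; ring, ffgg hq0]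
      _ = ∏ j ∈ range (2*r), (ff q s (((2*r - 1 - j : ℕ):ℤ) - 2*(r:ℤ)) *
            gg q s (((2*r - 1 - j : ℕ):ℤ) - 2*(r:ℤ))) := (Finset.prod_range_reflect _ _).symm
      _ = ∏ j ∈ range (2*r), (ff q s (-1 - (j:ℤ)) * gg q s (-1 - (j:ℤ))) := by
          refine Finset.prod_congr rfl fun j hj => ?_
          have hj' := Finset.mem_range.mp hj
          rw [show (((2*r - 1 - j : ℕ):ℤ) - 2*(r:ℤ)) = -1 - (j:ℤ) by omega]
      _ = ∏ m ∈ range r, ((ff q s (-1 - ((2*m : ℕ):ℤ)) * gg q s (-1 - ((2*m : ℕ):ℤ))) *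
            (ff q s (-1 - ((2*m+1 : ℕ):ℤ)) * gg q s (-1 - ((2*m+1 : ℕ):ℤ)))) := pairS _ r
      _ = ∏ m ∈ range r, ((ff q s (-2*(m:ℤ) + -1) * gg q s (-2*(m:ℤ) + -1)) *
            (ff q s (-2*(m:ℤ) + -2) * gg q s (-2*(m:ℤ) + -2))) := by
          refine Finset.prod_congr rfl fun m hm => ?_
          rw [show (-1 - ((2*m : ℕ):ℤ)) = -2*(m:ℤ) + -1 by push_cast; ring,
            show (-1 - ((2*m+1 : ℕ):ℤ)) = -2*(m:ℤ) + -2 by push_cast; ring]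
      _ = _ := by
          rw [Finset.prod_mul_distrib, Finset.prod_mul_distrib, Finset.prod_mul_distrib]
  -- ## Component 2: the first denominator
  have hP1den : (∏ j ∈ Finset.Icc 1 (2 * r),
        (1 - (q : ℂ) ^ (-(2 * (2 * s + 2 * (r : ℂ) - 2 * (j : ℂ) + 2))))) =
      ((∏ m ∈ range r, ff q s (-2*(m:ℤ) + -2)) * (∏ m ∈ range r, gg q s (-2*(m:ℤ) + -2))) *
      ((∏ m ∈ range r, ff q s (2*(m:ℤ))) * (∏ m ∈ range r, gg q s (2*(m:ℤ)))) := by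
    have hlow : (∏ j ∈ range r, (ff q s (2*(j:ℤ) - 2*(r:ℤ)) * gg q s (2*(j:ℤ) - 2*(r:ℤ)))) =
        ∏ m ∈ range r, (ff q s (-2*(m:ℤ) + -2) * gg q s (-2*(m:ℤ) + -2)) := by
      calc (∏ j ∈ range r, (ff q s (2*(j:ℤ) - 2*(r:ℤ)) * gg q s (2*(j:ℤ) - 2*(r:ℤ))))
          = ∏ j ∈ range r, (ff q s (2*((r - 1 - j : ℕ):ℤ) - 2*(r:ℤ)) *
              gg q s (2*((r - 1 - j : ℕ):ℤ) - 2*(r:ℤ))) := (Finset.prod_range_reflect _ _).symm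
        _ = _ := by
            refine Finset.prod_congr rfl fun j hj => ?_
            have hj' := Finset.mem_range.mp hj
            rw [show (2*((r - 1 - j : ℕ):ℤ) - 2*(r:ℤ)) = -2*(j:ℤ) + -2 by omega]
    calc ∏ j ∈ Finset.Icc 1 (2 * r), (1 - (q : ℂ) ^ (-(2 * (2 * s + 2 * (r : ℂ) - 2 * (j : ℂ) + 2))))
        = ∏ j ∈ range (2*r), (1 - (q : ℂ) ^ (-(2 * (2 * s + 2 * (r : ℂ) - 2 * ((j+1 : ℕ) : ℂ) + 2)))) :=
          prod_Icc_one _ _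
      _ = ∏ j ∈ range (2*r), (ff q s (2*(j:ℤ) - 2*(r:ℤ)) * gg q s (2*(j:ℤ) - 2*(r:ℤ))) := by
          refine Finset.prod_congr rfl fun j hj => ?_
          rw [show (-(2 * (2 * s + 2 * (r : ℂ) - 2 * ((j+1 : ℕ) : ℂ) + 2))) =
              -(4*s) + ((2*(2*(j:ℤ) - 2*(r:ℤ)) : ℤ) : ℂ) by push_cast; ring, ffgg hq0]
      _ = ∏ j ∈ range (r + r), (ff q s (2*(j:ℤ) - 2*(r:ℤ)) * gg q s (2*(j:ℤ) - 2*(r:ℤ))) := by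
          rw [two_mul]
      _ = (∏ j ∈ range r, (ff q s (2*(j:ℤ) - 2*(r:ℤ)) * gg q s (2*(j:ℤ) - 2*(r:ℤ)))) *
          (∏ j ∈ range r, (ff q s (2*((r + j : ℕ):ℤ) - 2*(r:ℤ)) *
            gg q s (2*((r + j : ℕ):ℤ) - 2*(r:ℤ)))) := Finset.prod_range_add _ r r
      _ = (∏ m ∈ range r, (ff q s (-2*(m:ℤ) + -2) * gg q s (-2*(m:ℤ) + -2))) *
          (∏ m ∈ range r, (ff q s (2*(m:ℤ)) * gg q s (2*(m:ℤ)))) := by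
          rw [hlow]
          refine congrArg _ (Finset.prod_congr rfl fun j hj => ?_)
          rw [show (2*((r + j : ℕ):ℤ) - 2*(r:ℤ)) = 2*(j:ℤ) by push_cast; ring]
      _ = _ := by rw [Finset.prod_mul_distrib, Finset.prod_mul_distrib]
  -- ## Component 3: the second numerator
  have hP2num : (∏ i ∈ Finset.Icc 1 (2 * r),
        (1 - (q : ℂ) ^ (-(2 * s + 2 * (r : ℂ) - 2 * (i : ℂ))))) =
      (∏ m ∈ range r, ff q s (-2*(m:ℤ))) * (∏ m ∈ range r, ff q s (2*(m:ℤ) + 2)) := by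
    have hlow : (∏ j ∈ range r, ff q s (2*(j:ℤ) + 2 - 2*(r:ℤ))) =
        ∏ m ∈ range r, ff q s (-2*(m:ℤ)) := by
      calc (∏ j ∈ range r, ff q s (2*(j:ℤ) + 2 - 2*(r:ℤ)))
          = ∏ j ∈ range r, ff q s (2*((r - 1 - j : ℕ):ℤ) + 2 - 2*(r:ℤ)) :=
            (Finset.prod_range_reflect _ _).symm
        _ = _ := by
            refine Finset.prod_congr rfl fun j hj => ?_
            have hj' := Finset.mem_range.mp hj
            rw [show (2*((r - 1 - j : ℕ):ℤ) + 2 - 2*(r:ℤ)) = -2*(j:ℤ) by omega]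
    calc ∏ i ∈ Finset.Icc 1 (2 * r), (1 - (q : ℂ) ^ (-(2 * s + 2 * (r : ℂ) - 2 * (i : ℂ))))
        = ∏ j ∈ range (2*r), (1 - (q : ℂ) ^ (-(2 * s + 2 * (r : ℂ) - 2 * ((j+1 : ℕ) : ℂ)))) :=
          prod_Icc_one _ _
      _ = ∏ j ∈ range (2*r), ff q s (2*(j:ℤ) + 2 - 2*(r:ℤ)) := by
          refine Finset.prod_congr rfl fun j hj => ?_
          rw [show (-(2 * s + 2 * (r : ℂ) - 2 * ((j+1 : ℕ) : ℂ))) =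
              -(2*s) + ((2*(j:ℤ) + 2 - 2*(r:ℤ) : ℤ) : ℂ) by push_cast; ring, one_sub hq0]
      _ = ∏ j ∈ range (r + r), ff q s (2*(j:ℤ) + 2 - 2*(r:ℤ)) := by rw [two_mul]
      _ = (∏ j ∈ range r, ff q s (2*(j:ℤ) + 2 - 2*(r:ℤ))) *
          (∏ j ∈ range r, ff q s (2*((r + j : ℕ):ℤ) + 2 - 2*(r:ℤ))) := Finset.prod_range_add _ r r
      _ = _ := by
          rw [hlow]
          refine congrArg _ (Finset.prod_congr rfl fun j hj => ?_)
          rw [show (2*((r + j : ℕ):ℤ) + 2 - 2*(r:ℤ)) = 2*(j:ℤ) + 2 by push_cast; ring]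
  -- ## Component 4: the second denominator
  have hP2den : (∏ i ∈ Finset.Icc 1 (2 * r),
        (1 - (q : ℂ) ^ (-(2 * s + 2 * (r : ℂ) - 2 * (i : ℂ) + 1)))) =
      (∏ m ∈ range r, ff q s (-2*(m:ℤ) + -1)) * (∏ m ∈ range r, ff q s (2*(m:ℤ) + 1)) := by
    have hlow : (∏ j ∈ range r, ff q s (2*(j:ℤ) + 1 - 2*(r:ℤ))) =
        ∏ m ∈ range r, ff q s (-2*(m:ℤ) + -1) := by
      calc (∏ j ∈ range r, ff q s (2*(j:ℤ) + 1 - 2*(r:ℤ)))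
          = ∏ j ∈ range r, ff q s (2*((r - 1 - j : ℕ):ℤ) + 1 - 2*(r:ℤ)) :=
            (Finset.prod_range_reflect _ _).symm
        _ = _ := by
            refine Finset.prod_congr rfl fun j hj => ?_
            have hj' := Finset.mem_range.mp hj
            rw [show (2*((r - 1 - j : ℕ):ℤ) + 1 - 2*(r:ℤ)) = -2*(j:ℤ) + -1 by omega]
    calc ∏ i ∈ Finset.Icc 1 (2 * r), (1 - (q : ℂ) ^ (-(2 * s + 2 * (r : ℂ) - 2 * (i : ℂ) + 1)))
        = ∏ j ∈ range (2*r), (1 - (q : ℂ) ^ (-(2 * s + 2 * (r : ℂ) - 2 * ((j+1 : ℕ) : ℂ) + 1))) :=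
          prod_Icc_one _ _
      _ = ∏ j ∈ range (2*r), ff q s (2*(j:ℤ) + 1 - 2*(r:ℤ)) := by
          refine Finset.prod_congr rfl fun j hj => ?_
          rw [show (-(2 * s + 2 * (r : ℂ) - 2 * ((j+1 : ℕ) : ℂ) + 1)) =
              -(2*s) + ((2*(j:ℤ) + 1 - 2*(r:ℤ) : ℤ) : ℂ) by push_cast; ring, one_sub hq0]
      _ = ∏ j ∈ range (r + r), ff q s (2*(j:ℤ) + 1 - 2*(r:ℤ)) := by rw [two_mul]
      _ = (∏ j ∈ range r, ff q s (2*(j:ℤ) + 1 - 2*(r:ℤ))) *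
          (∏ j ∈ range r, ff q s (2*((r + j : ℕ):ℤ) + 1 - 2*(r:ℤ))) := Finset.prod_range_add _ r r
      _ = _ := by
          rw [hlow]
          refine congrArg _ (Finset.prod_congr rfl fun j hj => ?_)
          rw [show (2*((r + j : ℕ):ℤ) + 1 - 2*(r:ℤ)) = 2*(j:ℤ) + 1 by push_cast; ring]
  -- ## Component 5: the right-hand numerator
  have hRnum : (∏ i ∈ Finset.Icc 1 (2 * r),
        (1 - (-1 : ℂ) ^ i * (q : ℂ) ^ (-(2 * s + (i : ℂ))))) =
      (∏ m ∈ range r, gg q s (-2*(m:ℤ) + -1)) * (∏ m ∈ range r, ff q s (-2*(m:ℤ) + -2)) := by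
    calc ∏ i ∈ Finset.Icc 1 (2 * r), (1 - (-1 : ℂ) ^ i * (q : ℂ) ^ (-(2 * s + (i : ℂ))))
        = ∏ j ∈ range (2*r), (1 - (-1 : ℂ) ^ (j+1) * (q : ℂ) ^ (-(2 * s + ((j+1 : ℕ) : ℂ)))) :=
          prod_Icc_one _ _
      _ = ∏ m ∈ range r, ((1 - (-1 : ℂ) ^ (2*m+1) * (q : ℂ) ^ (-(2 * s + ((2*m+1 : ℕ) : ℂ)))) *
            (1 - (-1 : ℂ) ^ (2*m+1+1) * (q : ℂ) ^ (-(2 * s + ((2*m+1+1 : ℕ) : ℂ))))) := pairS _ r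
      _ = ∏ m ∈ range r, (gg q s (-2*(m:ℤ) + -1) * ff q s (-2*(m:ℤ) + -2)) := by
          refine Finset.prod_congr rfl fun m hm => ?_
          have e1 : ((-1 : ℂ)) ^ (2*m+1) = -1 := by
            rw [pow_succ, pow_mul]; norm_num
          have e2 : ((-1 : ℂ)) ^ (2*m+1+1) = 1 := by
            rw [show 2*m+1+1 = 2*(m+1) by ring, pow_mul]; norm_num
          rw [e1, e2, one_mul, neg_one_mul, sub_neg_eq_add,
            show (-(2 * s + ((2*m+1 : ℕ) : ℂ))) = -(2*s) + ((-2*(m:ℤ) + -1 : ℤ) : ℂ) by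
              push_cast; ring,
            show (-(2 * s + ((2*m+1+1 : ℕ) : ℂ))) = -(2*s) + ((-2*(m:ℤ) + -2 : ℤ) : ℂ) by
              push_cast; ring,
            one_add hq0, one_sub hq0]
      _ = _ := by rw [Finset.prod_mul_distrib]
  -- ## Component 6: the right-hand denominator
  have hRden : (∏ i ∈ Finset.Icc 1 (2 * r),
        (1 - (-1 : ℂ) ^ i * (q : ℂ) ^ (-(2 * s - (i : ℂ) + 1)))) =
      (∏ m ∈ range r, gg q s (2*(m:ℤ))) * (∏ m ∈ range r, ff q s (2*(m:ℤ) + 1)) := by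
    calc ∏ i ∈ Finset.Icc 1 (2 * r), (1 - (-1 : ℂ) ^ i * (q : ℂ) ^ (-(2 * s - (i : ℂ) + 1)))
        = ∏ j ∈ range (2*r), (1 - (-1 : ℂ) ^ (j+1) * (q : ℂ) ^ (-(2 * s - ((j+1 : ℕ) : ℂ) + 1))) :=
          prod_Icc_one _ _
      _ = ∏ m ∈ range r, ((1 - (-1 : ℂ) ^ (2*m+1) * (q : ℂ) ^ (-(2 * s - ((2*m+1 : ℕ) : ℂ) + 1))) *
            (1 - (-1 : ℂ) ^ (2*m+1+1) * (q : ℂ) ^ (-(2 * s - ((2*m+1+1 : ℕ) : ℂ) + 1)))) := pairS _ r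
      _ = ∏ m ∈ range r, (gg q s (2*(m:ℤ)) * ff q s (2*(m:ℤ) + 1)) := by
          refine Finset.prod_congr rfl fun m hm => ?_
          have e1 : ((-1 : ℂ)) ^ (2*m+1) = -1 := by
            rw [pow_succ, pow_mul]; norm_num
          have e2 : ((-1 : ℂ)) ^ (2*m+1+1) = 1 := by
            rw [show 2*m+1+1 = 2*(m+1) by ring, pow_mul]; norm_num
          rw [e1, e2, one_mul, neg_one_mul, sub_neg_eq_add,
            show (-(2 * s - ((2*m+1 : ℕ) : ℂ) + 1)) = -(2*s) + ((2*(m:ℤ) : ℤ) : ℂ) by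
              push_cast; ring,
            show (-(2 * s - ((2*m+1+1 : ℕ) : ℂ) + 1)) = -(2*s) + ((2*(m:ℤ) + 1 : ℤ) : ℂ) by
              push_cast; ring,
            one_add hq0, one_sub hq0]
      _ = _ := by rw [Finset.prod_mul_distrib]
  -- ## Singletons
  have hw : (1 - (q : ℂ) ^ (-(2 * s - 2 * (r : ℂ)))) = ff q s (2*(r:ℤ)) := by
    rw [show (-(2 * s - 2 * (r : ℂ))) = -(2*s) + ((2*(r:ℤ) : ℤ) : ℂ) by push_cast; ring,
      one_sub hq0]
  have hz : (1 - (q : ℂ) ^ (-(2 * s + 2 * (r : ℂ)))) = ff q s (-2*(r:ℤ)) := by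
    rw [show (-(2 * s + 2 * (r : ℂ))) = -(2*s) + ((-2*(r:ℤ) : ℤ) : ℂ) by push_cast; ring,
      one_sub hq0]
  -- ## Nonvanishing
  have hffne : ∀ k : ℤ, (k:ℝ) ≤ 2*(r:ℝ) → ff q s k ≠ 0 := fun k hk =>
    ff_ne hq (lt_of_le_of_lt hk (by linarith))
  have hggne : ∀ k : ℤ, (k:ℝ) ≤ 2*(r:ℝ) → gg q s k ≠ 0 := fun k hk =>
    gg_ne hq (lt_of_le_of_lt hk (by linarith))
  have harg : ∀ m ∈ range r, ((m:ℝ) + 1 ≤ (r:ℝ)) := fun m hm => by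
    exact_mod_cast Nat.succ_le_of_lt (Finset.mem_range.mp hm)
  have hm0 : ∀ m : ℕ, (0:ℝ) ≤ (m:ℝ) := fun m => Nat.cast_nonneg m
  have hne1 : (((∏ m ∈ range r, ff q s (-2*(m:ℤ) + -2)) * (∏ m ∈ range r, gg q s (-2*(m:ℤ) + -2))) *
      ((∏ m ∈ range r, ff q s (2*(m:ℤ))) * (∏ m ∈ range r, gg q s (2*(m:ℤ))))) *
      ((∏ m ∈ range r, ff q s (-2*(m:ℤ) + -1)) * (∏ m ∈ range r, ff q s (2*(m:ℤ) + 1))) ≠ 0 := by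
    refine mul_ne_zero (mul_ne_zero (mul_ne_zero ?_ ?_) (mul_ne_zero ?_ ?_)) (mul_ne_zero ?_ ?_) <;>
      refine Finset.prod_ne_zero_iff.mpr fun m hm => ?_
    · exact hffne _ (by have := harg m hm; have := hm0 m; push_cast; linarith)
    · exact hggne _ (by have := harg m hm; have := hm0 m; push_cast; linarith)
    · exact hffne _ (by have := harg m hm; have := hm0 m; push_cast; linarith)
    · exact hggne _ (by have := harg m hm; have := hm0 m; push_cast; linarith)
    · exact hffne _ (by have := harg m hm; have := hm0 m; push_cast; linarith)
    · exact hffne _ (by have := harg m hm; have := hm0 m; push_cast; linarith)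
  have hne2 : ((∏ m ∈ range r, gg q s (2*(m:ℤ))) * (∏ m ∈ range r, ff q s (2*(m:ℤ) + 1))) *
      ff q s (-2*(r:ℤ)) ≠ 0 := by
    refine mul_ne_zero (mul_ne_zero ?_ ?_) (hffne _ (by have := hm0 r; push_cast; linarith))
    · exact Finset.prod_ne_zero_iff.mpr fun m hm =>
        hggne _ (by have := harg m hm; have := hm0 m; push_cast; linarith)
    · exact Finset.prod_ne_zero_iff.mpr fun m hm =>
        hffne _ (by have := harg m hm; have := hm0 m; push_cast; linarith)
  -- ## Telescopes
  have T1 := telescope (ff q s) (-2) r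
  have T2 := telescope (ff q s) 2 r
  have key : (∏ m ∈ range r, ff q s (-2*(m:ℤ))) * (∏ m ∈ range r, ff q s (2*(m:ℤ) + 2)) *
      ff q s (-2*(r:ℤ)) =
      (∏ m ∈ range r, ff q s (-2*(m:ℤ) + -2)) * (∏ m ∈ range r, ff q s (2*(m:ℤ))) *
      ff q s (2*(r:ℤ)) := by
    linear_combination (-(∏ m ∈ range r, ff q s (2*(m:ℤ) + 2))) * T1 +
      (∏ m ∈ range r, ff q s (-2*(m:ℤ) + -2)) * T2
  -- ## Assembly
  rw [Finset.prod_div_distrib, Finset.prod_div_distrib, Finset.prod_div_distrib,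
    hP1num, hP1den, hP2num, hP2den, hRnum, hRden, hw, hz,
    div_mul_div_comm, div_mul_div_comm, div_eq_div_iff hne1 hne2]
  linear_combination ((∏ m ∈ range r, ff q s (-2*(m:ℤ) + -1)) *
    (∏ m ∈ range r, gg q s (-2*(m:ℤ) + -1)) * (∏ m ∈ range r, ff q s (-2*(m:ℤ) + -2)) *
    (∏ m ∈ range r, gg q s (-2*(m:ℤ) + -2)) * (∏ m ∈ range r, gg q s (2*(m:ℤ))) *
    (∏ m ∈ range r, ff q s (2*(m:ℤ) + 1))) * key
end
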